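/- arXiv:2010.03141 — 5 statements merged into one kernel-verified Lean document; each statement's English description precedes it below -/
import Mathlib

section
/- Let X follow the negative multinomial distribution NM(r, p) on (ℕ₀)^m with r ≥ 1. Then for every i, the estimator X_i/(r + X_· − 1) (interpreted as 0 when X_i = 0, even if the denominator vanishes) is an unbiased estimator of p_i: E[ X_i / (r + X_· − 1) ] = p_i, where X_· = X_1 + ... + X_m. -/
open scoped BigOperators

noncomputable def nbc (a : ℝ) (k : ℕ) : ℝ :=
  Real.Gamma (a + k) / (Real.Gamma a * k.factorial)

lemma nbc_zero (a : ℝ) (ha : 0 < a) : nbc a 0 = 1 := by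
  have := Real.Gamma_pos_of_pos ha
  simp [nbc, div_self this.ne']

lemma nbc_pos {a : ℝ} (ha : 0 < a) (k : ℕ) : 0 < nbc a k := by
  have h1 : (0:ℝ) < a + k := by positivity
  have := Real.Gamma_pos_of_pos h1
  have := Real.Gamma_pos_of_pos ha
  have : (0:ℝ) < k.factorial := by positivity
  unfold nbc; positivity

lemma nbc_succ {a : ℝ} (ha : 0 < a) (k : ℕ) :
    nbc a (k + 1) = nbc a k * ((a + k) / (k + 1)) := by
  have hk : (a + k) ≠ 0 := by positivity
  have hG : Real.Gamma (a + (k+1):ℝ) = (a + k) * Real.Gamma (a + k) := by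
    rw [show (a + (k+1):ℝ) = (a + k) + 1 by push_cast; ring, Real.Gamma_add_one hk]
  have hf : ((k+1).factorial : ℝ) = (k+1) * k.factorial := by
    rw [Nat.factorial_succ]; push_cast; ring
  have hGa := (Real.Gamma_pos_of_pos ha).ne'
  have hfk : (k.factorial : ℝ) ≠ 0 := by positivity
  have hk1 : ((k:ℝ)+1) ≠ 0 := by positivity
  unfold nbc
  push_cast
  rw [hG]
  push_cast [hf]
  field_simp

lemma nbc_le {a : ℝ} (ha : 0 < a) (k : ℕ) :
    nbc a k ≤ ((k:ℝ) + 1) ^ (⌈a⌉₊) := by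
  set n := ⌈a⌉₊ with hn
  induction k with
  | zero => simp [nbc_zero a ha]
  | succ k ih =>
    have hk1 : (0:ℝ) < (k:ℝ) + 1 := by positivity
    have hb : (a + k) / ((k:ℝ)+1) ≤ (1 + 1/((k:ℝ)+1)) ^ n := by
      have h1 : a ≤ n := Nat.le_ceil a
      have h2 : (1:ℝ) + n * (1/((k:ℝ)+1)) ≤ (1 + 1/((k:ℝ)+1)) ^ n := by
        apply one_add_mul_le_pow
        have : (0:ℝ) ≤ 1/((k:ℝ)+1) := by positivity
        linarith
      have h3 : (a + k) / ((k:ℝ)+1) ≤ 1 + n * (1/((k:ℝ)+1)) := by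
        rw [div_le_iff₀ hk1]
        field_simp
        nlinarith
      linarith
    calc nbc a (k+1) = nbc a k * ((a + k) / (k+1)) := nbc_succ ha k
      _ ≤ ((k:ℝ)+1)^n * ((1 + 1/((k:ℝ)+1)) ^ n) := by
          apply mul_le_mul ih hb (by positivity) (by positivity)
      _ = (((k:ℝ)+1) * (1 + 1/((k:ℝ)+1))) ^ n := by rw [mul_pow]
      _ = (((k+1:ℕ):ℝ) + 1) ^ n := by
          congr 1
          push_cast
          field_simp

lemma nbc_deriv_summable {a : ℝ} (ha : 0 < a) {ρ : ℝ} (h0 : 0 < ρ) (h1 : ρ < 1) :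
    Summable (fun k : ℕ => nbc a k * (k:ℝ) * ρ ^ (k - 1)) := by
  set n := ⌈a⌉₊ with hn
  have hbase : Summable (fun k : ℕ => ((2:ℝ)^n / ρ) * ((k:ℝ) ^ (n+1) * ρ ^ k)) := by
    apply Summable.mul_left
    apply summable_pow_mul_geometric_of_norm_lt_one
    rw [Real.norm_eq_abs, abs_of_pos h0]; exact h1
  apply Summable.of_nonneg_of_le _ _ hbase
  · intro k
    have := nbc_pos ha k
    positivity
  · intro k
    match k with
    | 0 => simp
    | (j+1) =>
      have hle : nbc a (j+1) ≤ ((j:ℝ)+1+1)^n := by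
        have := nbc_le ha (j+1); push_cast at this ⊢; linarith
      have h2 : ((j:ℝ)+1+1)^n ≤ (2*((j:ℝ)+1))^n := by
        apply pow_le_pow_left₀ (by positivity)
        nlinarith [Nat.cast_nonneg (α := ℝ) j]
      have h3 : (2*((j:ℝ)+1))^n = 2^n * ((j:ℝ)+1)^n := by rw [mul_pow]
      have hρ : ρ ^ (j + 1 - 1) = ρ ^ (j+1) / ρ := by
        rw [Nat.add_sub_cancel, pow_succ, mul_div_assoc, div_self h0.ne', mul_one]
      rw [hρ]
      have hnn : (0:ℝ) ≤ ((j:ℝ)+1)^(n+1) * ρ^(j+1) := by positivity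
      have hcast : ((j+1:ℕ):ℝ) = (j:ℝ)+1 := by push_cast; ring
      rw [hcast]
      have key : nbc a (j+1) * ((j:ℝ)+1) * (ρ^(j+1)/ρ) ≤
          (2^n * ((j:ℝ)+1)^n) * ((j:ℝ)+1) * (ρ^(j+1)/ρ) := by
        apply mul_le_mul_of_nonneg_right _ (by positivity)
        apply mul_le_mul_of_nonneg_right _ (by positivity)
        calc nbc a (j+1) ≤ ((j:ℝ)+1+1)^n := hle
          _ ≤ _ := by rw [← h3]; exact h2
      calc nbc a (j+1) * ((j:ℝ)+1) * (ρ^(j+1)/ρ) ≤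
            (2^n * ((j:ℝ)+1)^n) * ((j:ℝ)+1) * (ρ^(j+1)/ρ) := key
        _ = (2:ℝ)^n / ρ * (((j:ℝ)+1) ^ (n+1) * ρ ^ (j+1)) := by
            rw [pow_succ]; ring

set_option maxHeartbeats 1000000 in
lemma negBinom_hasSum {a : ℝ} (ha : 0 < a) {q : ℝ} (hq0 : 0 ≤ q) (hq1 : q < 1) :
    HasSum (fun k : ℕ => nbc a k * q ^ k) ((1 - q) ^ (-a)) := by
  set ρ : ℝ := (1 + q) / 2 with hρ
  have hρ0 : 0 < ρ := by rw [hρ]; linarith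
  have hρ1 : ρ < 1 := by rw [hρ]; linarith
  have hqρ : q < ρ := by rw [hρ]; linarith
  set t : Set ℝ := Set.Ioo (-ρ) ρ with htdef
  have ht : IsOpen t := isOpen_Ioo
  have htc : IsPreconnected t := (convex_Ioo _ _).isPreconnected
  set g : ℕ → ℝ → ℝ := fun k x => nbc a k * x ^ k with hgdef
  set g' : ℕ → ℝ → ℝ := fun k x => nbc a k * ((k:ℝ) * x ^ (k - 1)) with hg'def
  set u : ℕ → ℝ := fun k => nbc a k * (k:ℝ) * ρ ^ (k - 1) with hudef
  have hu : Summable u := nbc_deriv_summable ha hρ0 hρ1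
  have hg : ∀ k : ℕ, ∀ y ∈ t, HasDerivAt (g k) (g' k y) y := by
    intro k y _
    exact (hasDerivAt_pow k y).const_mul (nbc a k)
  have hbound : ∀ k : ℕ, ∀ y ∈ t, ‖g' k y‖ ≤ u k := by
    intro k y hy
    have hyρ : |y| ≤ ρ := by
      rw [abs_le]
      exact ⟨hy.1.le, hy.2.le⟩
    have := nbc_pos ha k
    calc ‖g' k y‖ = nbc a k * ((k:ℝ) * |y| ^ (k-1)) := by
          rw [hg'def]
          simp [Real.norm_eq_abs, abs_mul, abs_of_pos this, abs_pow, Nat.abs_cast]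
      _ ≤ nbc a k * ((k:ℝ) * ρ ^ (k-1)) := by
          apply mul_le_mul_of_nonneg_left _ this.le
          apply mul_le_mul_of_nonneg_left _ (Nat.cast_nonneg k)
          exact pow_le_pow_left₀ (abs_nonneg y) hyρ _
      _ = u k := by rw [hudef]; ring
  have h0t : (0:ℝ) ∈ t := by constructor <;> simp [hρ0] <;> linarith
  have hg0 : Summable (fun k => g k 0) := by
    apply summable_of_ne_finset_zero (s := {0})
    intro k hk
    have : k ≠ 0 := by simpa using hk
    simp [hgdef, zero_pow this]
  have hqt : q ∈ t := ⟨by linarith, hqρ⟩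
  have hsumt : ∀ y ∈ t, Summable (fun k => g k y) := fun y hy =>
    summable_of_summable_hasDerivAt_of_isPreconnected hu ht htc hg hbound h0t hg0 hy
  set F : ℝ → ℝ := fun z => ∑' k, g k z with hFdef
  have hderiv : ∀ y ∈ t, HasDerivAt F (∑' k, g' k y) y := fun y hy =>
    hasDerivAt_tsum_of_isPreconnected hu ht htc hg hbound h0t hg0 hy
  -- The ODE: (1 - y) * D = a * F y on t
  have hODE : ∀ y ∈ t, (1 - y) * (∑' k, g' k y) = a * F y := by
    intro y hy
    have hDsum : Summable (fun k => g' k y) :=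
      Summable.of_norm_bounded hu (fun k => hbound k y hy)
    have hB : Summable (fun k => g' (k+1) y) := (summable_nat_add_iff 1).2 hDsum
    have hC : Summable (fun k => y * g' k y) := hDsum.mul_left y
    have hD0 : ∑' k, g' k y = ∑' k, g' (k+1) y := by
      rw [Summable.tsum_eq_zero_add hDsum]
      simp [hg'def]
    have hyD : y * (∑' k, g' k y) = ∑' k, y * g' k y := (tsum_mul_left).symm
    have hptwise : ∀ k : ℕ, g' (k+1) y - y * g' k y = a * g k y := by
      intro k
      match k with
      | 0 =>
        have h1 : nbc a 1 = a := by
          rw [show (1:ℕ) = 0 + 1 from rfl, nbc_succ ha 0, nbc_zero a ha]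
          simp
        simp [hg'def, hgdef, h1, nbc_zero a ha]
      | (j+1) =>
        have hs := nbc_succ ha (j+1)
        have hj2 : ((j:ℝ)+1+1) ≠ 0 := by positivity
        simp only [hg'def, hgdef, Nat.add_sub_cancel]
        rw [hs]
        push_cast
        field_simp
        ring
    calc (1 - y) * (∑' k, g' k y)
        = (∑' k, g' k y) - (∑' k, y * g' k y) := by rw [sub_mul, one_mul, hyD]
      _ = (∑' k, g' (k+1) y) - (∑' k, y * g' k y) := by rw [hD0]
      _ = ∑' k, (g' (k+1) y - y * g' k y) := (Summable.tsum_sub hB hC).symm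
      _ = ∑' k, a * g k y := by
          apply tsum_congr
          exact hptwise
      _ = a * F y := by rw [tsum_mul_left]
  -- G := (1-z)^a * F z has zero derivative on t
  set G : ℝ → ℝ := fun z => (1 - z) ^ a * F z with hGdef
  have hGderiv : ∀ y ∈ t, HasDerivAt G 0 y := by
    intro y hy
    have h1y : (0:ℝ) < 1 - y := by
      have := hy.2
      linarith
    have d1 : HasDerivAt (fun z : ℝ => 1 - z) (-1) y := (hasDerivAt_id y).const_sub 1
    have d2 : HasDerivAt (fun z : ℝ => (1 - z) ^ a) ((-1) * a * (1 - y) ^ (a - 1)) y :=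
      d1.rpow_const (Or.inl h1y.ne')
    have d3 := d2.mul (hderiv y hy)
    have hval : (-1) * a * (1-y)^(a-1) * F y + (1-y)^a * (∑' k, g' k y) = 0 := by
      have hr : (1-y)^a = (1-y)^(a-1) * (1-y) := by
        rw [Real.rpow_sub_one h1y.ne' a]
        field_simp
      rw [hr]
      have := hODE y hy
      linear_combination ((1-y):ℝ)^(a-1) * this
    rw [← hval]
    exact d3
  -- constancy on [0, q]
  have hsub : Set.Icc (0:ℝ) q ⊆ t := by
    intro x hx
    exact ⟨by linarith [hx.1], by linarith [hx.2]⟩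
  have hconst : G q = G 0 := by
    have hcont : ContinuousOn G (Set.Icc 0 q) := fun x hx =>
      ((hGderiv x (hsub hx)).continuousAt).continuousWithinAt
    have hd : ∀ x ∈ Set.Ico (0:ℝ) q, HasDerivWithinAt G 0 (Set.Ici x) x := by
      intro x hx
      exact (hGderiv x (hsub ⟨hx.1, hx.2.le⟩)).hasDerivWithinAt
    exact constant_of_has_deriv_right_zero hcont hd q (Set.right_mem_Icc.2 hq0)
  have hF0 : F 0 = 1 := by
    simp only [hFdef]
    rw [tsum_eq_single 0]
    · simp [hgdef, nbc_zero a ha]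
    · intro k hk
      simp [hgdef, zero_pow hk]
  have hG0 : G 0 = 1 := by
    rw [hGdef]; simp [hF0, Real.one_rpow]
  have hGq : (1 - q)^a * F q = 1 := by
    have := hconst; rw [hG0] at this; exact this
  have h1q : (0:ℝ) < 1 - q := by linarith
  have hFq : F q = (1 - q) ^ (-a) := by
    rw [Real.rpow_neg h1q.le]
    have hne : (1-q)^a ≠ 0 := (Real.rpow_pos_of_pos h1q a).ne'
    field_simp at hGq ⊢
    linarith [hGq]
  rw [← hFq]
  exact ((hsumt q hqt).hasSum_iff).2 rfl

set_option maxHeartbeats 1000000 in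
lemma NM_core (m : ℕ) : ∀ (a : ℝ), 0 < a → ∀ p : Fin m → ℝ, (∀ i, 0 ≤ p i) →
    ∑ i, p i < 1 →
    HasSum (fun x : Fin m → ℕ =>
      Real.Gamma (a + ∑ j, (x j : ℝ)) / (Real.Gamma a * ∏ j, (Nat.factorial (x j) : ℝ)) *
        ∏ j, p j ^ x j)
      ((1 - ∑ i, p i) ^ (-a : ℝ)) := by
  induction m with
  | zero =>
    intro a ha p hp hps
    have hall : ∀ x y : Fin 0 → ℕ, x = y := fun x y => funext fun i => i.elim0
    have h := hasSum_single (f := fun x : Fin 0 → ℕ =>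
      Real.Gamma (a + ∑ j, (x j : ℝ)) / (Real.Gamma a * ∏ j, (Nat.factorial (x j) : ℝ)) *
        ∏ j, p j ^ x j) (fun _ => 0) (by intro b' hb'; exact absurd (hall b' _) hb')
    have hG := (Real.Gamma_pos_of_pos ha).ne'
    simpa [Finset.univ_eq_empty, div_self hG, Real.one_rpow] using h
  | succ m IH =>
    intro a ha p hp hps
    have hsum_split : ∑ i, p i = p 0 + ∑ j : Fin m, p j.succ := Fin.sum_univ_succ p
    have hsucc_nonneg : (0:ℝ) ≤ ∑ j : Fin m, p j.succ :=
      Finset.sum_nonneg fun j _ => hp j.succ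
    have hp0lt : p 0 < 1 := by linarith
    have h1p0 : (0:ℝ) < 1 - p 0 := by linarith
    set q : Fin m → ℝ := fun j => p j.succ / (1 - p 0) with hqdef
    have hq : ∀ j, 0 ≤ q j := fun j => div_nonneg (hp j.succ) h1p0.le
    have hqsum : ∑ j, q j = (∑ j : Fin m, p j.succ) / (1 - p 0) := by
      rw [hqdef, ← Finset.sum_div]
    have hqs : ∑ j, q j < 1 := by
      rw [hqsum, div_lt_one h1p0]
      linarith
    have IH' := IH a ha q hq hqs
    set f : (Fin (m+1) → ℕ) → ℝ := fun x =>
      Real.Gamma (a + ∑ j, (x j : ℝ)) / (Real.Gamma a * ∏ j, (Nat.factorial (x j) : ℝ)) *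
        ∏ j, p j ^ x j with hfdef
    set P : (Fin m → ℕ) × ℕ → ℝ := fun z => f (Fin.cons z.2 z.1) with hPdef
    set g : (Fin m → ℕ) → ℝ := fun y =>
      (1 - p 0) ^ (-(a + ∑ j, (y j : ℝ))) *
        (Real.Gamma (a + ∑ j, (y j : ℝ)) /
          (Real.Gamma a * ∏ j, (Nat.factorial (y j) : ℝ)) *
          ∏ j, p j.succ ^ y j) with hgdef
    -- pointwise description of P
    have hPval : ∀ (y : Fin m → ℕ) (n : ℕ), P (y, n) =
        Real.Gamma ((a + ∑ j, (y j : ℝ)) + n) /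
          (Real.Gamma a * ((n.factorial : ℝ) * ∏ j, (Nat.factorial (y j) : ℝ))) *
          ((p 0) ^ n * ∏ j, p j.succ ^ y j) := by
      intro y n
      simp only [hPdef, hfdef, Fin.sum_univ_succ, Fin.prod_univ_succ, Fin.cons_zero,
        Fin.cons_succ]
      ring_nf
    have h1 : ∀ y : Fin m → ℕ, HasSum (fun n => P (y, n)) (g y) := by
      intro y
      set a' : ℝ := a + ∑ j, (y j : ℝ) with ha'def
      have ha' : 0 < a' := by
        have : (0:ℝ) ≤ ∑ j, (y j : ℝ) := Finset.sum_nonneg fun j _ => Nat.cast_nonneg _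
        rw [ha'def]; linarith
      have hbase := (negBinom_hasSum ha' (hp 0) hp0lt).mul_left
        (Real.Gamma a' / (Real.Gamma a * ∏ j, (Nat.factorial (y j) : ℝ)) *
          ∏ j, p j.succ ^ y j)
      have hGa := (Real.Gamma_pos_of_pos ha).ne'
      have hGa' := (Real.Gamma_pos_of_pos ha').ne'
      have hptwise : ∀ n : ℕ,
          (Real.Gamma a' / (Real.Gamma a * ∏ j, (Nat.factorial (y j) : ℝ)) *
            ∏ j, p j.succ ^ y j) * (nbc a' n * (p 0) ^ n) = P (y, n) := by
        intro n
        rw [hPval y n]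
        unfold nbc
        have hfn : ((n.factorial : ℝ)) ≠ 0 := by positivity
        have hfy : (∏ j, (Nat.factorial (y j) : ℝ)) ≠ 0 := by positivity
        field_simp
        ring
      have hval : (Real.Gamma a' / (Real.Gamma a * ∏ j, (Nat.factorial (y j) : ℝ)) *
            ∏ j, p j.succ ^ y j) * (1 - p 0) ^ (-a') = g y := by
        simp only [hgdef]
        ring
      rw [← hval]
      exact HasSum.congr_fun hbase (fun n => (hptwise n).symm)
    -- sum of g
    have h2 : HasSum g ((1 - ∑ i, p i) ^ (-a : ℝ)) := by
      have hgval : ∀ y : Fin m → ℕ, g y =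
          (1 - p 0) ^ (-a : ℝ) *
            (Real.Gamma (a + ∑ j, (y j : ℝ)) /
              (Real.Gamma a * ∏ j, (Nat.factorial (y j) : ℝ)) *
              ∏ j, q j ^ y j) := by
        intro y
        have hsplit : (1 - p 0) ^ (-(a + ∑ j, (y j : ℝ))) =
            (1 - p 0) ^ (-a : ℝ) * (1 - p 0) ^ (-(∑ j, (y j : ℝ))) := by
          rw [← Real.rpow_add h1p0]
          ring_nf
        have hnat : (∑ j, (y j : ℝ)) = ((∑ j, y j : ℕ) : ℝ) := by push_cast; ring
        have hpow : (1 - p 0) ^ (-(∑ j, (y j : ℝ))) = ∏ j, ((1 - p 0)⁻¹) ^ y j := by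
          rw [hnat, Real.rpow_neg h1p0.le, Real.rpow_natCast,
            Finset.prod_pow_eq_pow_sum, inv_pow]
        have hqpow : ∀ j, q j ^ y j = p j.succ ^ y j * ((1 - p 0)⁻¹) ^ y j := by
          intro j
          rw [hqdef]
          simp only [div_eq_mul_inv, mul_pow]
        simp only [hgdef]
        rw [hsplit, hpow]
        rw [Finset.prod_congr rfl (fun j _ => hqpow j), Finset.prod_mul_distrib]
        ring
      have hbig := IH'.mul_left ((1 - p 0) ^ (-a : ℝ))
      have hvals : (1 - p 0) ^ (-a : ℝ) * (1 - ∑ i, q i) ^ (-a : ℝ) =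
          (1 - ∑ i, p i) ^ (-a : ℝ) := by
        have h1q : 1 - ∑ i, q i = (1 - ∑ i, p i) / (1 - p 0) := by
          rw [hqsum]
          field_simp
          linarith [hsum_split]
        have htot : (0:ℝ) < 1 - ∑ i, p i := by linarith
        rw [h1q, Real.div_rpow htot.le h1p0.le]
        have hne : (1 - p 0) ^ (-a : ℝ) ≠ 0 := (Real.rpow_pos_of_pos h1p0 _).ne'
        field_simp
      rw [← hvals]
      apply HasSum.congr_fun hbig
      intro y
      exact hgval y
    -- nonnegativity
    have h3 : ∀ z : (Fin m → ℕ) × ℕ, 0 ≤ P z := by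
      intro z
      rw [hPval z.1 z.2]
      have hApos : (0:ℝ) < a + ∑ j, ((z.1 j : ℝ)) := by
        have : (0:ℝ) ≤ ∑ j, ((z.1 j : ℝ)) := Finset.sum_nonneg fun j _ => Nat.cast_nonneg _
        linarith
      have hGpos : (0:ℝ) < Real.Gamma ((a + ∑ j, ((z.1 j : ℝ))) + z.2) := by
        apply Real.Gamma_pos_of_pos
        have : (0:ℝ) ≤ (z.2 : ℝ) := Nat.cast_nonneg _
        linarith
      have := Real.Gamma_pos_of_pos ha
      have hprod : (0:ℝ) ≤ ∏ j, p j.succ ^ z.1 j :=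
        Finset.prod_nonneg fun j _ => pow_nonneg (hp j.succ) _
      have hp0n : (0:ℝ) ≤ (p 0) ^ z.2 := pow_nonneg (hp 0) _
      have hfy : (0:ℝ) < ∏ j, (Nat.factorial (z.1 j) : ℝ) := by positivity
      have hfn : (0:ℝ) < (Nat.factorial z.2 : ℝ) := by positivity
      positivity
    -- combine
    have sP : Summable P := by
      rw [summable_prod_of_nonneg h3]
      constructor
      · exact fun y => (h1 y).summable
      · have : (fun y => ∑' n, P (y, n)) = g := funext fun y => (h1 y).tsum_eq
        rw [this]
        exact h2.summable
    have htsum : ∑' z, P z = (1 - ∑ i, p i) ^ (-a : ℝ) := by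
      rw [Summable.tsum_prod' sP (fun y => (h1 y).summable)]
      have : (fun y => ∑' n, P (y, n)) = g := funext fun y => (h1 y).tsum_eq
      calc ∑' y, ∑' n, P (y, n) = ∑' y, g y := by rw [this]
        _ = _ := h2.tsum_eq
    have hP : HasSum P ((1 - ∑ i, p i) ^ (-a : ℝ)) := (sP.hasSum_iff).2 htsum
    let eqv : ((Fin m → ℕ) × ℕ) ≃ (Fin (m+1) → ℕ) :=
      ⟨fun z => Fin.cons z.2 z.1, fun x => (fun j => x j.succ, x 0),
        fun z => by simp, fun x => by
          funext j
          refine Fin.cases ?_ ?_ j <;> simp⟩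
    have hfe : ∀ z : (Fin m → ℕ) × ℕ, (f ∘ ⇑eqv) z = P z := fun z => rfl
    exact (Equiv.hasSum_iff (f := f) eqv).1 (HasSum.congr_fun hP hfe)

set_option maxHeartbeats 1000000 in
/-- For `X ~ NM(r, p)` with `r ≥ 1`, the UMVU estimator `X i / (r + X_· − 1)`
(with the convention `0 / 0 = 0`, which is Lean's division) is unbiased for `p i`. -/
theorem negMultinomial_umvu_unbiased (m : ℕ) (hm : 1 ≤ m) (r : ℝ) (hr : 1 ≤ r)
    (p : Fin m → ℝ) (hp : ∀ i, 0 < p i) (hps : ∑ i, p i < 1) (i : Fin m) :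
    ∑' x : Fin m → ℕ,
      ((x i : ℝ) / (r + ∑ j, (x j : ℝ) - 1)) *
        (Real.Gamma (r + ∑ j, (x j : ℝ)) / (Real.Gamma r * ∏ j, (Nat.factorial (x j) : ℝ)) *
          (1 - ∑ j, p j) ^ r * ∏ j, p j ^ x j)
      = p i := by
  have hr0 : (0:ℝ) < r := lt_of_lt_of_le one_pos hr
  have hT : (0:ℝ) < 1 - ∑ j, p j := by linarith
  set F : (Fin m → ℕ) → ℝ := fun x =>
    ((x i : ℝ) / (r + ∑ j, (x j : ℝ) - 1)) *
      (Real.Gamma (r + ∑ j, (x j : ℝ)) / (Real.Gamma r * ∏ j, (Nat.factorial (x j) : ℝ)) *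
        (1 - ∑ j, p j) ^ r * ∏ j, p j ^ x j) with hFdef
  set G : (Fin m → ℕ) → ℝ := fun y =>
    Real.Gamma (r + ∑ j, (y j : ℝ)) / (Real.Gamma r * ∏ j, (Nat.factorial (y j) : ℝ)) *
      (1 - ∑ j, p j) ^ r * ∏ j, p j ^ y j with hGdef
  have hG : HasSum G 1 := by
    have hcore := (NM_core m r hr0 p (fun j => (hp j).le) hps).mul_left ((1 - ∑ j, p j) ^ r)
    have hval : (1 - ∑ j, p j) ^ r * (1 - ∑ i, p i) ^ (-r : ℝ) = 1 := by
      rw [← Real.rpow_add hT]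
      simp
    rw [hval] at hcore
    apply HasSum.congr_fun hcore
    intro y
    simp only [hGdef]
    ring
  set ι : (Fin m → ℕ) → (Fin m → ℕ) := fun y => Function.update y i (y i + 1) with hιdef
  have hinj : Function.Injective ι := by
    intro y z h
    funext j
    by_cases hj : j = i
    · subst hj
      have := congrFun h j
      simpa [hιdef, Function.update_self] using this
    · have := congrFun h j
      simpa [hιdef, Function.update_of_ne hj] using this
  have hsupp : Function.support F ⊆ Set.range ι := by
    intro x hx
    by_cases hxi : x i = 0
    · exfalso
      apply hx
      simp only [hFdef, hxi]
      simp
    · refine ⟨Function.update x i (x i - 1), ?_⟩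
      simp only [hιdef]
      rw [Function.update_idem, Function.update_self]
      rw [Nat.sub_add_cancel (Nat.one_le_iff_ne_zero.2 hxi)]
      exact Function.update_eq_self i x
  have hF : ∀ y : Fin m → ℕ, F (ι y) = p i * G y := by
    intro y
    have hSnat : ∑ j, ι y j = (∑ j, y j) + 1 := by
      simp only [hιdef]
      rw [Finset.sum_update_of_mem (Finset.mem_univ i)]
      have := Finset.add_sum_erase Finset.univ y (Finset.mem_univ i)
      rw [show Finset.univ \ {i} = Finset.univ.erase i by
        rw [Finset.sdiff_singleton_eq_erase]]
      omega
    have hSreal : ∑ j, ((ι y j : ℕ) : ℝ) = (∑ j, ((y j : ℕ) : ℝ)) + 1 := by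
      rw [← Nat.cast_sum, ← Nat.cast_sum, hSnat]
      push_cast
      ring
    have hfac : ∏ j, ((ι y j).factorial : ℝ) =
        ((y i : ℝ) + 1) * ∏ j, ((y j).factorial : ℝ) := by
      have hnat : ∏ j, (ι y j).factorial = (y i + 1) * ∏ j, (y j).factorial := by
        simp only [hιdef]
        rw [show (fun x => (Function.update y i (y i + 1) x).factorial) =
            Function.update (fun j => (y j).factorial) i ((y i + 1).factorial) from
          funext fun x => Function.apply_update (fun _ n => n.factorial) y i (y i + 1) x]
        rw [Finset.prod_update_of_mem (Finset.mem_univ i)]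
        have h2 := Finset.mul_prod_erase Finset.univ (fun j => (y j).factorial)
          (Finset.mem_univ i)
        rw [show Finset.univ \ {i} = Finset.univ.erase i by
          rw [Finset.sdiff_singleton_eq_erase]]
        rw [Nat.factorial_succ, ← h2]
        ring
      rw [← Nat.cast_prod, ← Nat.cast_prod, hnat]
      push_cast
      ring
    have hppow : ∏ j, p j ^ (ι y j) = p i * ∏ j, p j ^ y j := by
      simp only [hιdef]
      rw [show (fun x => p x ^ Function.update y i (y i + 1) x) =
          Function.update (fun j => p j ^ y j) i (p i ^ (y i + 1)) from
        funext fun x => Function.apply_update (fun j n => p j ^ n) y i (y i + 1) x]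
      rw [Finset.prod_update_of_mem (Finset.mem_univ i)]
      have h2 := Finset.mul_prod_erase Finset.univ (fun j => p j ^ y j)
        (Finset.mem_univ i)
      rw [show Finset.univ \ {i} = Finset.univ.erase i by
        rw [Finset.sdiff_singleton_eq_erase]]
      rw [pow_succ, ← h2]
      ring
    have hιi : ι y i = y i + 1 := by simp [hιdef]
    set S : ℝ := ∑ j, ((y j : ℕ) : ℝ) with hSdef
    have hS0 : (0:ℝ) ≤ S := Finset.sum_nonneg fun j _ => Nat.cast_nonneg _
    have hrS : (0:ℝ) < r + S := by linarith
    have hGamma : Real.Gamma (r + (S + 1)) = (r + S) * Real.Gamma (r + S) := by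
      rw [show r + (S + 1) = (r + S) + 1 by ring, Real.Gamma_add_one hrS.ne']
    simp only [hFdef, hGdef]
    rw [hSreal, hιi, hppow, hfac, hGamma]
    have hGr := (Real.Gamma_pos_of_pos hr0).ne'
    have hfy : (∏ j, ((y j).factorial : ℝ)) ≠ 0 := by positivity
    have hyi1 : ((y i : ℝ) + 1) ≠ 0 := by positivity
    have hden : r + (S + 1) - 1 = r + S := by ring
    rw [hden]
    push_cast
    field_simp
    ring
  calc ∑' x, F x = ∑' y, F (ι y) := (hinj.tsum_eq hsupp).symm
    _ = ∑' y, p i * G y := tsum_congr hF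
    _ = p i * ∑' y, G y := tsum_mul_left
    _ = p i := by rw [hG.tsum_eq, mul_one]
end

section
/- Hudson-type identity for the negative multinomial distribution: let X ~ NM(r, p) on (ℕ₀)^m and let φ : (ℕ₀)^m → ℝ be nonnegative (or with E|φ(X)| < ∞). Fix a coordinate i, and suppose φ(x) = 0 whenever x_i = 0. Then E[ φ(X) / p_i ] = E[ (r + X_·)/(X_i + 1) · φ(X + e_i) ], where X_· = Σ_j X_j and e_i is the i-th standard unit vector. -/
open scoped BigOperators

/-- Hudson-type identity for the negative multinomial distribution: for nonnegative `φ`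
vanishing on `{x : x i = 0}`,
`E[φ(X)/p i] = E[((r + X_·)/(X i + 1)) · φ(X + e i)]`. -/
theorem negMultinomial_hudson_identity (m : ℕ) (hm : 1 ≤ m) (r : ℝ) (hr : 0 < r)
    (p : Fin m → ℝ) (hp : ∀ i, 0 < p i) (hps : ∑ i, p i < 1)
    (φ : (Fin m → ℕ) → ℝ) (hφ : ∀ x, 0 ≤ φ x) (i : Fin m)
    (hvan : ∀ x : Fin m → ℕ, x i = 0 → φ x = 0) :
    ∑' x : Fin m → ℕ,
      (φ x / p i) *
        (Real.Gamma (r + ∑ j, (x j : ℝ)) / (Real.Gamma r * ∏ j, (Nat.factorial (x j) : ℝ)) *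
          (1 - ∑ j, p j) ^ r * ∏ j, p j ^ x j)
      = ∑' x : Fin m → ℕ,
          ((r + ∑ j, (x j : ℝ)) / ((x i : ℝ) + 1)) * φ (Function.update x i (x i + 1)) *
            (Real.Gamma (r + ∑ j, (x j : ℝ)) / (Real.Gamma r * ∏ j, (Nat.factorial (x j) : ℝ)) *
              (1 - ∑ j, p j) ^ r * ∏ j, p j ^ x j) := by
  classical
  set F : (Fin m → ℕ) → ℝ := fun x =>
    (φ x / p i) *
      (Real.Gamma (r + ∑ j, (x j : ℝ)) / (Real.Gamma r * ∏ j, (Nat.factorial (x j) : ℝ)) *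
        (1 - ∑ j, p j) ^ r * ∏ j, p j ^ x j) with hF
  set g : (Fin m → ℕ) → (Fin m → ℕ) := fun x => Function.update x i (x i + 1) with hg
  have hginj : Function.Injective g := by
    intro a b hab
    funext j
    by_cases hj : j = i
    · subst hj
      have h := congrFun hab j
      simp only [g, Function.update_self] at h
      omega
    · have h := congrFun hab j
      simpa [g, Function.update_of_ne hj] using h
  have hrange : ∀ y, y ∉ Set.range g → F y = 0 := by
    intro y hy
    by_cases h0 : y i = 0
    · simp [hF, hvan y h0]
    · exfalso
      apply hy
      refine ⟨Function.update y i (y i - 1), ?_⟩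
      funext j
      by_cases hj : j = i
      · subst hj
        simp only [g, Function.update_self]
        omega
      · simp [g, Function.update_of_ne hj]
  calc ∑' x, F x = ∑' x, F (g x) :=
      (hginj.tsum_eq (Function.support_subset_iff'.2 hrange)).symm
    _ = _ := by
      refine tsum_congr fun x => ?_
      have hsum : ∑ j, ((g x j : ℕ) : ℝ) = (∑ j, (x j : ℝ)) + 1 := by
        simp only [g, Function.apply_update (fun _ n => ((n : ℕ) : ℝ)) x i (x i + 1)]
        rw [Finset.sum_update_of_mem (Finset.mem_univ i)]
        rw [show (∑ j, (x j : ℝ)) = (x i : ℝ) + ∑ j ∈ Finset.univ \ {i}, (x j : ℝ) by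
          rw [Finset.sum_eq_add_sum_sdiff_singleton_of_mem (Finset.mem_univ i)]]
        push_cast
        ring
      have hfac : (∏ j, (Nat.factorial (g x j) : ℝ)) =
          ((x i : ℝ) + 1) * ∏ j, (Nat.factorial (x j) : ℝ) := by
        simp only [g, Function.apply_update (fun _ n => ((Nat.factorial n : ℕ) : ℝ)) x i (x i + 1)]
        rw [Finset.prod_update_of_mem (Finset.mem_univ i)]
        rw [show (∏ j, (Nat.factorial (x j) : ℝ))
            = (Nat.factorial (x i) : ℝ) * ∏ j ∈ Finset.univ \ {i}, (Nat.factorial (x j) : ℝ) by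
          rw [Finset.prod_eq_mul_prod_sdiff_singleton_of_mem (Finset.mem_univ i)]]
        rw [Nat.factorial_succ]
        push_cast
        ring
      have hpp : (∏ j, p j ^ (g x j)) = p i * ∏ j, p j ^ x j := by
        simp only [g, Function.apply_update (fun k n => p k ^ n) x i (x i + 1)]
        rw [Finset.prod_update_of_mem (Finset.mem_univ i)]
        rw [show (∏ j, p j ^ x j)
            = p i ^ x i * ∏ j ∈ Finset.univ \ {i}, p j ^ x j by
          rw [Finset.prod_eq_mul_prod_sdiff_singleton_of_mem (Finset.mem_univ i)]]
        rw [pow_succ]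
        ring
      have hs0 : (0:ℝ) ≤ ∑ j, (x j : ℝ) := Finset.sum_nonneg fun j _ => Nat.cast_nonneg _
      have hrs : r + ∑ j, (x j : ℝ) ≠ 0 := by positivity
      have hGamma : Real.Gamma (r + ((∑ j, (x j : ℝ)) + 1))
          = (r + ∑ j, (x j : ℝ)) * Real.Gamma (r + ∑ j, (x j : ℝ)) := by
        rw [show r + ((∑ j, (x j : ℝ)) + 1) = (r + ∑ j, (x j : ℝ)) + 1 by ring]
        exact Real.Gamma_add_one hrs
      have hpi : p i ≠ 0 := (hp i).ne'
      have hxi : ((x i : ℝ) + 1) ≠ 0 := by positivity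
      have hGr : Real.Gamma r ≠ 0 := (Real.Gamma_pos_of_pos hr).ne'
      have hP : (∏ j, (Nat.factorial (x j) : ℝ)) ≠ 0 :=
        Finset.prod_ne_zero_iff.2 fun j _ => by
          exact_mod_cast (Nat.factorial_pos (x j)).ne'
      simp only [hF, hsum, hfac, hpp, hGamma]
      have hφeq : φ (g x) = φ (Function.update x i (x i + 1)) := rfl
      rw [hφeq]
      field_simp
end

section
/- Risk-difference identity for shrinkage estimation (single population): let X ~ NM(r, p) on (ℕ₀)^m with r ≥ 1, let δ : ℕ₀ → (0, ∞), and define the shrinkage estimator p̂_i^δ = X_i/(r + X_· − 1 + δ(X_·)) and the unbiased estimator p̂_i^U = X_i/(r + X_· − 1), with 0/0 = 0. Then for weights c_1, ..., c_m ≥ 0, the difference of standardized squared error risks satisfies E[ Σ_i c_i (p̂_i^δ − p_i)²/p_i ] − E[ Σ_i c_i (p̂_i^U − p_i)²/p_i ] = E[ Σ_i c_i ((X_i + 1)/(r + X_·)) · ( {δ(X_· + 1)/(r + X_· + δ(X_· + 1))}² − 2 δ(X_· + 1)/(r + X_· + δ(X_· + 1)) ) + 2 Σ_i c_i (X_i/(r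 + X_· − 1)) · δ(X_·)/(r + X_· − 1 + δ(X_·)) ], provided both risks are finite. -/
open scoped BigOperators
open Filter Function

private lemma nm_ratio_summable (r P : ℝ) (hr : 1 ≤ r) (hP0 : 0 < P) (hP1 : P < 1) :
    Summable (fun n : ℕ => Real.Gamma (r + n) / (Real.Gamma r * (Nat.factorial n : ℝ)) * P ^ n) := by
  set a : ℕ → ℝ := fun n => Real.Gamma (r + n) / (Real.Gamma r * (Nat.factorial n : ℝ)) * P ^ n
    with ha
  have hrpos : (0:ℝ) < r := lt_of_lt_of_le one_pos hr
  have hΓr : 0 < Real.Gamma r := Real.Gamma_pos_of_pos hrpos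
  have hapos : ∀ n, 0 < a n := by
    intro n
    have h1 : 0 < Real.Gamma (r + n) := Real.Gamma_pos_of_pos (by positivity)
    have h2 : (0:ℝ) < (Nat.factorial n : ℝ) := by positivity
    rw [ha]
    positivity
  have hrec : ∀ n : ℕ, a (n + 1) = a n * ((r + n) * P / (n + 1)) := by
    intro n
    have h1 : (r : ℝ) + ((n:ℕ) + 1 : ℕ) = (r + n) + 1 := by push_cast; ring
    have h2 : Real.Gamma ((r + n) + 1) = (r + n) * Real.Gamma (r + n) :=
      Real.Gamma_add_one (by positivity)
    have h3 : (((n:ℕ) + 1 : ℕ).factorial : ℝ) = ((n:ℝ) + 1) * (n.factorial : ℝ) := by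
      rw [Nat.factorial_succ]; push_cast; ring
    have hf : (n.factorial : ℝ) ≠ 0 := by positivity
    have hn1 : ((n:ℝ) + 1) ≠ 0 := by positivity
    rw [ha]
    simp only [h1, h2, h3]
    field_simp
    ring
  apply summable_of_ratio_test_tendsto_lt_one hP1 (Eventually.of_forall fun n => (hapos n).ne')
  have heq : ∀ n : ℕ, ‖a (n + 1)‖ / ‖a n‖ = P * ((r - 1) * (1 / ((n:ℝ) + 1)) + 1) := by
    intro n
    have h4 : (0:ℝ) < (r + n) * P / (n + 1) := by positivity
    have hna : ‖a n‖ ≠ 0 := ne_of_gt (by rw [Real.norm_eq_abs, abs_of_pos (hapos n)]; exact hapos n)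
    rw [hrec n, norm_mul, mul_comm, mul_div_assoc, div_self hna, mul_one,
      Real.norm_eq_abs, abs_of_pos h4]
    field_simp
    ring
  simp only [heq]
  have h0 : Tendsto (fun n : ℕ => 1 / ((n:ℝ) + 1)) atTop (nhds 0) :=
    tendsto_one_div_add_atTop_nhds_zero_nat
  have := (((h0.const_mul (r - 1)).add_const 1).const_mul P)
  simpa using this

private lemma nm_pmf_summable (m : ℕ) (hm : 1 ≤ m) (r : ℝ) (hr : 1 ≤ r)
    (p : Fin m → ℝ) (hp : ∀ i, 0 < p i) (hps : ∑ i, p i < 1)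
    (pmf : (Fin m → ℕ) → ℝ)
    (hpmf : ∀ x : Fin m → ℕ,
      pmf x = Real.Gamma (r + ∑ j, (x j : ℝ)) / (Real.Gamma r * ∏ j, (Nat.factorial (x j) : ℝ)) *
        (1 - ∑ j, p j) ^ r * ∏ j, p j ^ x j)
    (hser : Summable (fun n : ℕ =>
        Real.Gamma (r + n) / (Real.Gamma r * (Nat.factorial n : ℝ)) * (∑ i, p i) ^ n)) :
    Summable pmf := by
  haveI : Nonempty (Fin m) := ⟨⟨0, hm⟩⟩
  have hrpos : (0:ℝ) < r := lt_of_lt_of_le one_pos hr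
  have hΓr : 0 < Real.Gamma r := Real.Gamma_pos_of_pos hrpos
  have hP0 : 0 < ∑ i, p i := Finset.sum_pos (fun i _ => hp i) Finset.univ_nonempty
  have hq0 : (0:ℝ) < 1 - ∑ i, p i := by linarith
  set ser : ℕ → ℝ := fun n =>
      Real.Gamma (r + n) / (Real.Gamma r * (Nat.factorial n : ℝ)) * (∑ i, p i) ^ n with hserdef
  have hserpos : ∀ k, 0 < ser k := by
    intro k
    have h1 : 0 < Real.Gamma (r + k) := Real.Gamma_pos_of_pos (by positivity)
    have h2 : (0:ℝ) < (Nat.factorial k : ℝ) := by positivity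
    rw [hserdef]; positivity
  have hpos : ∀ x, 0 < pmf x := by
    intro x
    rw [hpmf x]
    have hS : (0:ℝ) ≤ ∑ j, ((x j : ℕ) : ℝ) := Finset.sum_nonneg fun j _ => Nat.cast_nonneg _
    have h1 : 0 < Real.Gamma (r + ∑ j, ((x j : ℕ):ℝ)) := Real.Gamma_pos_of_pos (by positivity)
    have h2 : (0:ℝ) < ∏ j, (Nat.factorial (x j) : ℝ) :=
      Finset.prod_pos fun j _ => by positivity
    have h3 : (0:ℝ) < (1 - ∑ j, p j) ^ r := Real.rpow_pos_of_pos hq0 r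
    have h4 : (0:ℝ) < ∏ j, p j ^ x j := Finset.prod_pos fun j _ => pow_pos (hp j) _
    positivity
  have group : ∀ k : ℕ, ∑ x ∈ Finset.piAntidiag Finset.univ k, pmf x
      = ser k * (1 - ∑ i, p i) ^ r := by
    intro k
    have perterm : ∀ x ∈ Finset.piAntidiag Finset.univ k,
        pmf x = Real.Gamma (r + k) / (Real.Gamma r * (Nat.factorial k : ℝ)) *
          ((Nat.multinomial Finset.univ x : ℝ) * ∏ j, p j ^ x j) * (1 - ∑ i, p i) ^ r := by
      intro x hx
      have hsum : ∑ j, x j = k := (Finset.mem_piAntidiag.mp hx).1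
      have hcast : (∑ j, ((x j : ℕ) : ℝ)) = (k : ℝ) := by
        rw [← Nat.cast_sum, hsum]
      have hkey : ((Nat.factorial k : ℕ) : ℝ)
          = (∏ j, (Nat.factorial (x j) : ℝ)) * (Nat.multinomial Finset.univ x : ℝ) := by
        rw [← Nat.cast_prod, ← Nat.cast_mul, Nat.multinomial_spec, hsum]
      have hfne : (∏ j, (Nat.factorial (x j) : ℝ)) ≠ 0 :=
        ne_of_gt (Finset.prod_pos fun j _ => by positivity)
      have hmne : (Nat.multinomial Finset.univ x : ℝ) ≠ 0 :=
        ne_of_gt (by exact_mod_cast Nat.multinomial_pos _ _)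
      have hkne : ((Nat.factorial k : ℕ) : ℝ) ≠ 0 := by positivity
      rw [hpmf x, hcast, hkey]
      field_simp
    rw [Finset.sum_congr rfl perterm, ← Finset.sum_mul, ← Finset.mul_sum,
      ← Finset.sum_pow_eq_sum_piAntidiag]
  apply summable_of_sum_le (c := (∑' k, ser k) * (1 - ∑ i, p i) ^ r)
    (fun x => (hpos x).le)
  intro u
  set N := u.sup (fun x => ∑ j, x j) with hN
  have hsub : u ⊆ (Finset.range (N+1)).biUnion (fun k => Finset.piAntidiag Finset.univ k) := by
    intro x hx
    refine Finset.mem_biUnion.mpr ⟨∑ j, x j, ?_, ?_⟩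
    · exact Finset.mem_range.mpr (Nat.lt_succ_of_le (Finset.le_sup hx))
    · exact Finset.mem_piAntidiag.mpr ⟨rfl, fun i _ => Finset.mem_univ i⟩
  have hdisj : ∀ k ∈ (Finset.range (N+1) : Finset ℕ), ∀ l ∈ (Finset.range (N+1) : Finset ℕ),
      k ≠ l → Disjoint (Finset.piAntidiag (Finset.univ : Finset (Fin m)) k)
        (Finset.piAntidiag Finset.univ l) := by
    intro k _ l _ hkl
    refine Finset.disjoint_left.mpr fun x hxk hxl => hkl ?_
    rw [← (Finset.mem_piAntidiag.mp hxk).1, ← (Finset.mem_piAntidiag.mp hxl).1]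
  calc ∑ x ∈ u, pmf x
      ≤ ∑ x ∈ (Finset.range (N+1)).biUnion (fun k => Finset.piAntidiag Finset.univ k), pmf x :=
        Finset.sum_le_sum_of_subset_of_nonneg hsub (fun x _ _ => (hpos x).le)
    _ = ∑ k ∈ Finset.range (N+1), ∑ x ∈ Finset.piAntidiag Finset.univ k, pmf x :=
        Finset.sum_biUnion hdisj
    _ = (∑ k ∈ Finset.range (N+1), ser k) * (1 - ∑ i, p i) ^ r := by
        rw [Finset.sum_congr rfl fun k _ => group k, ← Finset.sum_mul]
    _ ≤ (∑' k, ser k) * (1 - ∑ i, p i) ^ r := by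
        apply mul_le_mul_of_nonneg_right
          (Summable.sum_le_tsum _ (fun k _ => (hserpos k).le) hser)
          (le_of_lt (Real.rpow_pos_of_pos hq0 r))

private lemma nm_update_sum_nat {m : ℕ} (x : Fin m → ℕ) (i : Fin m) :
    ∑ j, Function.update x i (x i + 1) j = (∑ j, x j) + 1 := by
  rw [Finset.sum_update_of_mem (Finset.mem_univ i)]
  have := Finset.add_sum_erase Finset.univ x (Finset.mem_univ i)
  simp only [Finset.erase_eq] at this
  omega

private lemma nm_update_sum_cast {m : ℕ} (x : Fin m → ℕ) (i : Fin m) :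
    ∑ j, ((Function.update x i (x i + 1) j : ℕ) : ℝ) = (∑ j, ((x j : ℕ) : ℝ)) + 1 := by
  have h := nm_update_sum_nat x i
  have h1 : ((∑ j, Function.update x i (x i + 1) j : ℕ) : ℝ) = ∑ j, ((Function.update x i (x i + 1) j : ℕ) : ℝ) :=
    Nat.cast_sum _ _
  have h2 : ((∑ j, x j : ℕ) : ℝ) = ∑ j, ((x j : ℕ) : ℝ) := Nat.cast_sum _ _
  rw [← h1, h, Nat.cast_add, Nat.cast_one, h2]

private lemma nm_update_prod_fact {m : ℕ} (x : Fin m → ℕ) (i : Fin m) :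
    ∏ j, (Nat.factorial (Function.update x i (x i + 1) j) : ℝ)
      = ((x i : ℝ) + 1) * ∏ j, (Nat.factorial (x j) : ℝ) := by
  rw [← Finset.mul_prod_erase Finset.univ _ (Finset.mem_univ i),
    ← Finset.mul_prod_erase Finset.univ (fun j => (Nat.factorial (x j) : ℝ)) (Finset.mem_univ i)]
  have h1 : ∀ j ∈ Finset.univ.erase i,
      (Nat.factorial (Function.update x i (x i + 1) j) : ℝ) = (Nat.factorial (x j) : ℝ) := by
    intro j hj
    rw [Function.update_of_ne (Finset.ne_of_mem_erase hj)]
  rw [Finset.prod_congr rfl h1, Function.update_self, Nat.factorial_succ]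
  push_cast
  ring

private lemma nm_update_prod_pow {m : ℕ} (p : Fin m → ℝ) (x : Fin m → ℕ) (i : Fin m) :
    ∏ j, p j ^ (Function.update x i (x i + 1) j) = p i * ∏ j, p j ^ x j := by
  rw [← Finset.mul_prod_erase Finset.univ _ (Finset.mem_univ i),
    ← Finset.mul_prod_erase Finset.univ (fun j => p j ^ x j) (Finset.mem_univ i)]
  have h1 : ∀ j ∈ Finset.univ.erase i,
      p j ^ (Function.update x i (x i + 1) j) = p j ^ x j := by
    intro j hj
    rw [Function.update_of_ne (Finset.ne_of_mem_erase hj)]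
  rw [Finset.prod_congr rfl h1, Function.update_self, pow_succ]
  ring

private lemma nm_pmf_shift (m : ℕ) (r : ℝ) (hr : 1 ≤ r)
    (p : Fin m → ℝ) (pmf : (Fin m → ℕ) → ℝ)
    (hpmf : ∀ x : Fin m → ℕ,
      pmf x = Real.Gamma (r + ∑ j, (x j : ℝ)) / (Real.Gamma r * ∏ j, (Nat.factorial (x j) : ℝ)) *
        (1 - ∑ j, p j) ^ r * ∏ j, p j ^ x j)
    (x : Fin m → ℕ) (i : Fin m) :
    pmf (Function.update x i (x i + 1))
      = (r + ∑ j, (x j : ℝ)) * p i / ((x i : ℝ) + 1) * pmf x := by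
  have hrpos : (0:ℝ) < r := lt_of_lt_of_le one_pos hr
  have hΓr : 0 < Real.Gamma r := Real.Gamma_pos_of_pos hrpos
  have hS : (0:ℝ) ≤ ∑ j, ((x j : ℕ) : ℝ) := Finset.sum_nonneg fun j _ => Nat.cast_nonneg _
  have hrS : (0:ℝ) < r + ∑ j, ((x j : ℕ) : ℝ) := by linarith
  have hG : Real.Gamma (r + ((∑ j, ((x j : ℕ) : ℝ)) + 1))
      = (r + ∑ j, ((x j : ℕ) : ℝ)) * Real.Gamma (r + ∑ j, ((x j : ℕ) : ℝ)) := by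
    rw [show r + ((∑ j, ((x j : ℕ) : ℝ)) + 1) = (r + ∑ j, ((x j : ℕ) : ℝ)) + 1 by ring,
      Real.Gamma_add_one (ne_of_gt hrS)]
  have hfne : (∏ j, (Nat.factorial (x j) : ℝ)) ≠ 0 :=
    ne_of_gt (Finset.prod_pos fun j _ => by positivity)
  have hxine : ((x i : ℝ) + 1) ≠ 0 := by positivity
  rw [hpmf, hpmf x, nm_update_sum_cast, nm_update_prod_fact, nm_update_prod_pow, hG]
  field_simp

private lemma nm_Fcomp (m : ℕ) (r : ℝ) (hr : 1 ≤ r)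
    (p : Fin m → ℝ) (hp : ∀ i, 0 < p i) (δ : ℕ → ℝ) (hδ : ∀ n, 0 < δ n)
    (c : Fin m → ℝ) (pmf : (Fin m → ℕ) → ℝ)
    (hpmf : ∀ x : Fin m → ℕ,
      pmf x = Real.Gamma (r + ∑ j, (x j : ℝ)) / (Real.Gamma r * ∏ j, (Nat.factorial (x j) : ℝ)) *
        (1 - ∑ j, p j) ^ r * ∏ j, p j ^ x j)
    (i : Fin m) (y : Fin m → ℕ) :
    c i * ((Function.update y i (y i + 1) i : ℕ) : ℝ) ^ 2 *
        (1 / (r + ∑ j, ((Function.update y i (y i + 1) j : ℕ) : ℝ) - 1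
            + δ (∑ j, Function.update y i (y i + 1) j)) ^ 2
          - 1 / (r + ∑ j, ((Function.update y i (y i + 1) j : ℕ) : ℝ) - 1) ^ 2) / p i *
        pmf (Function.update y i (y i + 1))
      = c i * ((y i : ℝ) + 1) * (r + ∑ j, (y j : ℝ)) *
          (1 / (r + ∑ j, (y j : ℝ) + δ (∑ j, y j + 1)) ^ 2 - 1 / (r + ∑ j, (y j : ℝ)) ^ 2) *
          pmf y := by
  have e1 : ((Function.update y i (y i + 1) i : ℕ) : ℝ) = ((y i : ℕ) : ℝ) + 1 := by
    rw [Function.update_self]; push_cast; ring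
  have e2 := nm_update_sum_cast y i
  have e3 := nm_update_sum_nat y i
  have e4 := nm_pmf_shift m r hr p pmf hpmf y i
  have hSnn : (0:ℝ) ≤ ∑ j, ((y j : ℕ) : ℝ) := Finset.sum_nonneg fun j _ => Nat.cast_nonneg _
  have hrSy : (0:ℝ) < r + ∑ j, ((y j : ℕ) : ℝ) := by linarith
  have hdy : 0 < δ ((∑ j, y j) + 1) := hδ _
  have hry1 : (0:ℝ) < r + ∑ j, ((y j : ℕ) : ℝ) + δ ((∑ j, y j) + 1) := by linarith
  have hyine : ((y i : ℕ) : ℝ) + 1 ≠ 0 := by positivity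
  have gen : ∀ (C Y T D P Q : ℝ), P ≠ 0 → Y + 1 ≠ 0 → T ≠ 0 → T + D ≠ 0 →
      C * (Y + 1) ^ 2 * (1 / (T + D) ^ 2 - 1 / T ^ 2) / P * (T * P / (Y + 1) * Q)
        = C * (Y + 1) * T * (1 / (T + D) ^ 2 - 1 / T ^ 2) * Q := by
    intro C Y T D P Q h1 h2 h3 h4
    field_simp
  rw [e1, e2, e3, e4]
  rw [show r + ((∑ j, ((y j : ℕ) : ℝ)) + 1) - 1 = r + ∑ j, ((y j : ℕ) : ℝ) by ring]
  exact gen (c i) ((y i : ℕ) : ℝ) (r + ∑ j, ((y j : ℕ) : ℝ)) (δ ((∑ j, y j) + 1)) (p i) (pmf y)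
    (hp i).ne' hyine hrSy.ne' hry1.ne'

private lemma nm_per_decomp (C X A d P : ℝ) (hP : P ≠ 0) (hd : 0 < d)
    (hA : 0 ≤ A) (hAX : A = 0 → X = 0) :
    C * (X / (A + d) - P) ^ 2 / P - C * (X / A - P) ^ 2 / P
      = C * X ^ 2 * (1 / (A + d) ^ 2 - 1 / A ^ 2) / P + 2 * (C * (X / A) * (d / (A + d))) := by
  by_cases h0 : A = 0
  · rw [h0, hAX h0]
    norm_num
  · have hApos : 0 < A := lt_of_le_of_ne hA (Ne.symm h0)
    have hAd : (0:ℝ) < A + d := by linarith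
    field_simp
    ring

private lemma nm_per_R (C Y T D Q : ℝ) (hT : T ≠ 0) (hTD : T + D ≠ 0) :
    C * ((Y + 1) / T) * ((D / (T + D)) ^ 2 - 2 * (D / (T + D))) * Q
      = C * (Y + 1) * T * (1 / (T + D) ^ 2 - 1 / T ^ 2) * Q := by
  field_simp
  ring

set_option maxHeartbeats 2000000 in
/-- Risk-difference identity for shrinkage estimation based on a single negative multinomial
observation: the difference of standardized squared error risks of the shrinkage estimator
`X i / (r + X_· - 1 + δ(X_·))` and the unbiased estimator `X i / (r + X_· - 1)` (with `0/0 = 0`)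
equals the stated expectation, provided both risks are finite. -/
theorem negMultinomial_risk_difference (m : ℕ) (hm : 1 ≤ m) (r : ℝ) (hr : 1 ≤ r)
    (p : Fin m → ℝ) (hp : ∀ i, 0 < p i) (hps : ∑ i, p i < 1)
    (δ : ℕ → ℝ) (hδ : ∀ n, 0 < δ n) (c : Fin m → ℝ) (hc : ∀ i, 0 ≤ c i)
    (pmf : (Fin m → ℕ) → ℝ)
    (hpmf : ∀ x : Fin m → ℕ,
      pmf x = Real.Gamma (r + ∑ j, (x j : ℝ)) / (Real.Gamma r * ∏ j, (Nat.factorial (x j) : ℝ)) *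
        (1 - ∑ j, p j) ^ r * ∏ j, p j ^ x j)
    (hsumδ : Summable (fun x : Fin m → ℕ =>
      (∑ i, c i * ((x i : ℝ) / (r + ∑ j, (x j : ℝ) - 1 + δ (∑ j, x j)) - p i) ^ 2 / p i) * pmf x))
    (hsumU : Summable (fun x : Fin m → ℕ =>
      (∑ i, c i * ((x i : ℝ) / (r + ∑ j, (x j : ℝ) - 1) - p i) ^ 2 / p i) * pmf x)) :
    (∑' x : Fin m → ℕ,
        (∑ i, c i * ((x i : ℝ) / (r + ∑ j, (x j : ℝ) - 1 + δ (∑ j, x j)) - p i) ^ 2 / p i) * pmf x)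
      - (∑' x : Fin m → ℕ,
          (∑ i, c i * ((x i : ℝ) / (r + ∑ j, (x j : ℝ) - 1) - p i) ^ 2 / p i) * pmf x)
      = ∑' x : Fin m → ℕ,
          ((∑ i, c i * (((x i : ℝ) + 1) / (r + ∑ j, (x j : ℝ))) *
              ((δ (∑ j, x j + 1) / (r + ∑ j, (x j : ℝ) + δ (∑ j, x j + 1))) ^ 2
                - 2 * (δ (∑ j, x j + 1) / (r + ∑ j, (x j : ℝ) + δ (∑ j, x j + 1)))))
            + 2 * ∑ i, c i * ((x i : ℝ) / (r + ∑ j, (x j : ℝ) - 1)) *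
                (δ (∑ j, x j) / (r + ∑ j, (x j : ℝ) - 1 + δ (∑ j, x j)))) * pmf x := by
  classical
  -- name the three summand functions
  set f : (Fin m → ℕ) → ℝ := fun x =>
    (∑ i, c i * ((x i : ℝ) / (r + ∑ j, (x j : ℝ) - 1 + δ (∑ j, x j)) - p i) ^ 2 / p i) * pmf x
    with hfdef
  set g : (Fin m → ℕ) → ℝ := fun x =>
    (∑ i, c i * ((x i : ℝ) / (r + ∑ j, (x j : ℝ) - 1) - p i) ^ 2 / p i) * pmf x with hgdef
  set R : (Fin m → ℕ) → ℝ := fun x =>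
    ((∑ i, c i * (((x i : ℝ) + 1) / (r + ∑ j, (x j : ℝ))) *
        ((δ (∑ j, x j + 1) / (r + ∑ j, (x j : ℝ) + δ (∑ j, x j + 1))) ^ 2
          - 2 * (δ (∑ j, x j + 1) / (r + ∑ j, (x j : ℝ) + δ (∑ j, x j + 1)))))
      + 2 * ∑ i, c i * ((x i : ℝ) / (r + ∑ j, (x j : ℝ) - 1)) *
          (δ (∑ j, x j) / (r + ∑ j, (x j : ℝ) - 1 + δ (∑ j, x j)))) * pmf x with hRdef
  set F : Fin m → (Fin m → ℕ) → ℝ := fun i x =>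
    c i * (x i : ℝ) ^ 2 * (1 / (r + ∑ j, (x j : ℝ) - 1 + δ (∑ j, x j)) ^ 2
      - 1 / (r + ∑ j, (x j : ℝ) - 1) ^ 2) / p i * pmf x with hFdef
  set H : Fin m → (Fin m → ℕ) → ℝ := fun i x =>
    c i * ((x i : ℝ) + 1) * (r + ∑ j, (x j : ℝ)) *
      (1 / (r + ∑ j, (x j : ℝ) + δ (∑ j, x j + 1)) ^ 2 - 1 / (r + ∑ j, (x j : ℝ)) ^ 2) * pmf x
    with hHdef
  set G : (Fin m → ℕ) → ℝ := fun x =>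
    (2 * ∑ i, c i * ((x i : ℝ) / (r + ∑ j, (x j : ℝ) - 1)) *
      (δ (∑ j, x j) / (r + ∑ j, (x j : ℝ) - 1 + δ (∑ j, x j)))) * pmf x with hGdef
  -- basic facts
  have hrpos : (0:ℝ) < r := lt_of_lt_of_le one_pos hr
  have hΓr : 0 < Real.Gamma r := Real.Gamma_pos_of_pos hrpos
  haveI : Nonempty (Fin m) := ⟨⟨0, hm⟩⟩
  have hP0 : 0 < ∑ i, p i := Finset.sum_pos (fun i _ => hp i) Finset.univ_nonempty
  have hq0 : (0:ℝ) < 1 - ∑ i, p i := by linarith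
  have hpos : ∀ x, 0 < pmf x := by
    intro x
    rw [hpmf x]
    have hS : (0:ℝ) ≤ ∑ j, ((x j : ℕ) : ℝ) := Finset.sum_nonneg fun j _ => Nat.cast_nonneg _
    have h1 : 0 < Real.Gamma (r + ∑ j, ((x j : ℕ):ℝ)) := Real.Gamma_pos_of_pos (by positivity)
    have h2 : (0:ℝ) < ∏ j, (Nat.factorial (x j) : ℝ) :=
      Finset.prod_pos fun j _ => by positivity
    have h3 : (0:ℝ) < (1 - ∑ j, p j) ^ r := Real.rpow_pos_of_pos hq0 r
    have h4 : (0:ℝ) < ∏ j, p j ^ x j := Finset.prod_pos fun j _ => pow_pos (hp j) _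
    positivity
  have hq : Summable pmf :=
    nm_pmf_summable m hm r hr p hp hps pmf hpmf (nm_ratio_summable r _ hr hP0 hps)
  have hSnn : ∀ x : Fin m → ℕ, (0:ℝ) ≤ ∑ j, ((x j : ℕ) : ℝ) :=
    fun x => Finset.sum_nonneg fun j _ => Nat.cast_nonneg _
  have hxleS : ∀ (x : Fin m → ℕ) (i : Fin m), ((x i : ℕ) : ℝ) ≤ ∑ j, ((x j : ℕ) : ℝ) :=
    fun x i => Finset.single_le_sum (f := fun j => ((x j : ℕ) : ℝ)) (fun j _ => Nat.cast_nonneg _) (Finset.mem_univ i)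
  have hA_nonneg : ∀ x : Fin m → ℕ, (0:ℝ) ≤ r + (∑ j, ((x j : ℕ) : ℝ)) - 1 := by
    intro x; have := hSnn x; linarith
  have hAzero : ∀ (x : Fin m → ℕ) (i : Fin m),
      r + (∑ j, ((x j : ℕ) : ℝ)) - 1 = 0 → ((x i : ℕ) : ℝ) = 0 := by
    intro x i h
    have h1 := hxleS x i
    have h2 : (0:ℝ) ≤ ((x i : ℕ) : ℝ) := Nat.cast_nonneg _
    linarith
  have hrS : ∀ x : Fin m → ℕ, (0:ℝ) < r + ∑ j, ((x j : ℕ) : ℝ) := by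
    intro x; have := hSnn x; linarith
  -- nonnegativity of g and per-term bound
  have hg_nonneg : ∀ x, 0 ≤ g x := by
    intro x
    rw [hgdef]
    apply mul_nonneg _ (hpos x).le
    exact Finset.sum_nonneg fun i _ =>
      div_nonneg (mul_nonneg (hc i) (sq_nonneg _)) (hp i).le
  have hterm_le_g : ∀ (x : Fin m → ℕ) (i : Fin m),
      c i * (((x i : ℕ) : ℝ) / (r + ∑ j, ((x j : ℕ) : ℝ) - 1) - p i) ^ 2 / p i * pmf x ≤ g x := by
    intro x i
    rw [hgdef]
    apply mul_le_mul_of_nonneg_right _ (hpos x).le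
    exact Finset.single_le_sum
      (f := fun i => c i * (((x i : ℕ) : ℝ) / (r + ∑ j, ((x j : ℕ) : ℝ) - 1) - p i) ^ 2 / p i)
      (fun i _ => div_nonneg (mul_nonneg (hc i) (sq_nonneg _)) (hp i).le) (Finset.mem_univ i)
  -- key bounds for F
  have hFkey : ∀ (i : Fin m) (x : Fin m → ℕ),
      0 ≤ -F i x ∧ -F i x ≤ 2 * g x + 2 * (c i * p i) * pmf x := by
    intro i x
    have hRHS0 : 0 ≤ 2 * g x + 2 * (c i * p i) * pmf x := by
      have := hg_nonneg x
      have h2 : 0 ≤ c i * p i := mul_nonneg (hc i) (hp i).le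
      have := (hpos x).le
      positivity
    by_cases hA0 : r + (∑ j, ((x j : ℕ) : ℝ)) - 1 = 0
    · have hx0 : ((x i : ℕ) : ℝ) = 0 := hAzero x i hA0
      have hF0 : F i x = 0 := by rw [hFdef]; simp [hx0]
      rw [hF0]
      simpa using hRHS0
    · have hApos : 0 < r + (∑ j, ((x j : ℕ) : ℝ)) - 1 := lt_of_le_of_ne (hA_nonneg x) (Ne.symm hA0)
      have hd : 0 < δ (∑ j, x j) := hδ _
      have hAd : 0 < r + (∑ j, ((x j : ℕ) : ℝ)) - 1 + δ (∑ j, x j) := by linarith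
      set A := r + (∑ j, ((x j : ℕ) : ℝ)) - 1 with hAdef
      set d := δ (∑ j, x j) with hddef
      have k1 : 1 / (A + d) ^ 2 ≤ 1 / A ^ 2 :=
        one_div_le_one_div_of_le (by positivity) (by nlinarith)
      have k1' : (0:ℝ) ≤ 1 / (A + d) ^ 2 := by positivity
      have hFeq : -F i x = c i * ((x i : ℕ) : ℝ) ^ 2 * (1 / A ^ 2 - 1 / (A + d) ^ 2) / p i * pmf x := by
        rw [hFdef]; ring
      constructor
      · rw [hFeq]
        have : (0:ℝ) ≤ 1 / A ^ 2 - 1 / (A + d) ^ 2 := by linarith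
        have hxnn : (0:ℝ) ≤ ((x i : ℕ) : ℝ) ^ 2 := sq_nonneg _
        have := hc i
        have := (hp i).le
        have := (hpos x).le
        positivity
      · rw [hFeq]
        have step1 : ((x i : ℕ) : ℝ) ^ 2 * (1 / A ^ 2 - 1 / (A + d) ^ 2)
            ≤ (((x i : ℕ) : ℝ) / A) ^ 2 := by
          have h1 : ((x i : ℕ) : ℝ) ^ 2 * (1 / A ^ 2 - 1 / (A + d) ^ 2)
              ≤ ((x i : ℕ) : ℝ) ^ 2 * (1 / A ^ 2) :=
            mul_le_mul_of_nonneg_left (by linarith) (sq_nonneg _)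
          have h2 : ((x i : ℕ) : ℝ) ^ 2 * (1 / A ^ 2) = (((x i : ℕ) : ℝ) / A) ^ 2 := by
            rw [div_pow]; ring
          linarith
        have step2 : (((x i : ℕ) : ℝ) / A) ^ 2
            ≤ 2 * (((x i : ℕ) : ℝ) / A - p i) ^ 2 + 2 * p i ^ 2 := by
          nlinarith [sq_nonneg (((x i : ℕ) : ℝ) / A - 2 * p i)]
        have m1 : c i * (((x i : ℕ) : ℝ) ^ 2 * (1 / A ^ 2 - 1 / (A + d) ^ 2))
            ≤ c i * (2 * (((x i : ℕ) : ℝ) / A - p i) ^ 2 + 2 * p i ^ 2) :=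
          mul_le_mul_of_nonneg_left (step1.trans step2) (hc i)
        have m2 : c i * ((x i : ℕ) : ℝ) ^ 2 * (1 / A ^ 2 - 1 / (A + d) ^ 2) / p i * pmf x
            ≤ c i * (2 * (((x i : ℕ) : ℝ) / A - p i) ^ 2 + 2 * p i ^ 2) / p i * pmf x := by
          apply mul_le_mul_of_nonneg_right _ (hpos x).le
          refine div_le_div_of_nonneg_right ?_ (hp i).le
          calc c i * ((x i : ℕ) : ℝ) ^ 2 * (1 / A ^ 2 - 1 / (A + d) ^ 2)
                = c i * (((x i : ℕ) : ℝ) ^ 2 * (1 / A ^ 2 - 1 / (A + d) ^ 2)) := by ring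
              _ ≤ _ := m1
        have m3gen : ∀ (C v P q : ℝ), P ≠ 0 →
            C * (2 * v + 2 * P ^ 2) / P * q = 2 * (C * v / P * q) + 2 * (C * P) * q := by
          intro C v P q hP
          field_simp
        have m3 : c i * (2 * (((x i : ℕ) : ℝ) / A - p i) ^ 2 + 2 * p i ^ 2) / p i * pmf x
            = 2 * (c i * (((x i : ℕ) : ℝ) / A - p i) ^ 2 / p i * pmf x)
              + 2 * (c i * p i) * pmf x :=
          m3gen (c i) ((((x i : ℕ) : ℝ) / A - p i) ^ 2) (p i) (pmf x) (hp i).ne'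
        have m4 : 2 * (c i * (((x i : ℕ) : ℝ) / A - p i) ^ 2 / p i * pmf x) ≤ 2 * g x := by
          have := hterm_le_g x i
          rw [← hAdef] at this
          linarith
        linarith [m2, m3, m4]
  have hFsummable : ∀ i, Summable (F i) := by
    intro i
    have hb : Summable (fun x => 2 * g x + 2 * (c i * p i) * pmf x) :=
      (hsumU.mul_left 2).add (hq.mul_left (2 * (c i * p i)))
    have h := Summable.of_nonneg_of_le (fun x => (hFkey i x).1) (fun x => (hFkey i x).2) hb
    simpa using h.neg
  set ι : Fin m → (Fin m → ℕ) → (Fin m → ℕ) :=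
    fun i y => Function.update y i (y i + 1) with hιdef
  have hinj : ∀ i, Function.Injective (ι i) := by
    intro i y z h
    funext j
    by_cases hji : j = i
    · subst hji
      have := congrFun h j
      simpa [hιdef] using this
    · have := congrFun h j
      simpa [hιdef, Function.update_of_ne hji] using this
  have hrange0 : ∀ i x, x ∉ Set.range (ι i) → F i x = 0 := by
    intro i x hx
    have hx0 : x i = 0 := by
      by_contra h0
      apply hx
      refine ⟨Function.update x i (x i - 1), ?_⟩
      rw [hιdef]
      simp only []
      rw [Function.update_idem, Function.update_self]
      rw [show x i - 1 + 1 = x i from Nat.succ_pred_eq_of_pos (Nat.pos_of_ne_zero h0)]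
      exact Function.update_eq_self i x
    rw [hFdef]
    simp [hx0]
  have hcomp : ∀ i, (fun y => F i (ι i y)) = H i := by
    intro i
    funext y
    simp only [hFdef, hHdef, hιdef]
    exact nm_Fcomp m r hr p hp δ hδ c pmf hpmf i y
  have hHsummable : ∀ i, Summable (H i) := by
    intro i
    have h1 : Summable (F i ∘ ι i) :=
      ((hinj i).summable_iff (hrange0 i)).mpr (hFsummable i)
    have h2 : F i ∘ ι i = H i := by
      funext y; rw [Function.comp_apply]; exact congrFun (hcomp i) y
    rwa [h2] at h1
  have htsum : ∀ i, ∑' x, F i x = ∑' y, H i y := by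
    intro i
    have hsupp : Function.support (F i) ⊆ Set.range (ι i) := by
      intro x hx
      by_contra h
      exact hx (hrange0 i x h)
    have h := (hinj i).tsum_eq hsupp
    rw [← h]
    exact tsum_congr fun y => congrFun (hcomp i) y
  -- G : nonnegativity, bound, summability
  have hGterm : ∀ (x : Fin m → ℕ) (i : Fin m),
      0 ≤ c i * (((x i : ℕ) : ℝ) / (r + ∑ j, ((x j : ℕ) : ℝ) - 1))
          * (δ (∑ j, x j) / (r + ∑ j, ((x j : ℕ) : ℝ) - 1 + δ (∑ j, x j)))
      ∧ c i * (((x i : ℕ) : ℝ) / (r + ∑ j, ((x j : ℕ) : ℝ) - 1))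
          * (δ (∑ j, x j) / (r + ∑ j, ((x j : ℕ) : ℝ) - 1 + δ (∑ j, x j))) ≤ c i := by
    intro x i
    have hd : 0 < δ (∑ j, x j) := hδ _
    have hAd : (0:ℝ) < r + ∑ j, ((x j : ℕ) : ℝ) - 1 + δ (∑ j, x j) := by
      have := hA_nonneg x; linarith
    have t2a : (0:ℝ) ≤ δ (∑ j, x j) / (r + ∑ j, ((x j : ℕ) : ℝ) - 1 + δ (∑ j, x j)) :=
      div_nonneg hd.le hAd.le
    have t2 : δ (∑ j, x j) / (r + ∑ j, ((x j : ℕ) : ℝ) - 1 + δ (∑ j, x j)) ≤ 1 := by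
      rw [div_le_one hAd]
      have := hA_nonneg x; linarith
    have t1a : (0:ℝ) ≤ ((x i : ℕ) : ℝ) / (r + ∑ j, ((x j : ℕ) : ℝ) - 1) :=
      div_nonneg (Nat.cast_nonneg _) (hA_nonneg x)
    have t1 : ((x i : ℕ) : ℝ) / (r + ∑ j, ((x j : ℕ) : ℝ) - 1) ≤ 1 := by
      by_cases h0 : r + (∑ j, ((x j : ℕ) : ℝ)) - 1 = 0
      · rw [h0, div_zero]; norm_num
      · have hApos : 0 < r + (∑ j, ((x j : ℕ) : ℝ)) - 1 :=
          lt_of_le_of_ne (hA_nonneg x) (Ne.symm h0)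
        rw [div_le_one hApos]
        have := hxleS x i; linarith
    constructor
    · exact mul_nonneg (mul_nonneg (hc i) t1a) t2a
    · calc c i * (((x i : ℕ) : ℝ) / (r + ∑ j, ((x j : ℕ) : ℝ) - 1))
            * (δ (∑ j, x j) / (r + ∑ j, ((x j : ℕ) : ℝ) - 1 + δ (∑ j, x j)))
          ≤ c i * (((x i : ℕ) : ℝ) / (r + ∑ j, ((x j : ℕ) : ℝ) - 1)) * 1 :=
            mul_le_mul_of_nonneg_left t2 (mul_nonneg (hc i) t1a)
        _ = c i * (((x i : ℕ) : ℝ) / (r + ∑ j, ((x j : ℕ) : ℝ) - 1)) := mul_one _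
        _ ≤ c i * 1 := mul_le_mul_of_nonneg_left t1 (hc i)
        _ = c i := mul_one _
  have hG_nonneg : ∀ x, 0 ≤ G x := by
    intro x
    rw [hGdef]
    apply mul_nonneg _ (hpos x).le
    apply mul_nonneg (by norm_num)
    exact Finset.sum_nonneg fun i _ => (hGterm x i).1
  have hG_le : ∀ x, G x ≤ 2 * (∑ i, c i) * pmf x := by
    intro x
    rw [hGdef]
    apply mul_le_mul_of_nonneg_right _ (hpos x).le
    have := Finset.sum_le_sum (fun i (_ : i ∈ Finset.univ) => (hGterm x i).2)
    linarith
  have hGsummable : Summable G :=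
    Summable.of_nonneg_of_le hG_nonneg hG_le (hq.mul_left (2 * ∑ i, c i))
  -- pointwise decomposition of f - g
  have hdecomp : ∀ x, f x - g x = (∑ i, F i x) + G x := by
    intro x
    simp only [hfdef, hgdef, hFdef, hGdef]
    rw [← sub_mul, ← Finset.sum_sub_distrib]
    rw [Finset.sum_congr rfl (fun i _ => nm_per_decomp (c i) ((x i : ℕ) : ℝ)
      (r + ∑ j, ((x j : ℕ) : ℝ) - 1) (δ (∑ j, x j)) (p i) (hp i).ne' (hδ _)
      (hA_nonneg x) (hAzero x i))]
    rw [Finset.sum_add_distrib, add_mul]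
    congr 1
    · rw [Finset.sum_mul]
    · rw [← Finset.mul_sum]
  -- pointwise decomposition of R
  have hRdecomp : ∀ x, R x = (∑ i, H i x) + G x := by
    intro x
    have hrSx := hrS x
    have hdx : 0 < δ ((∑ j, x j) + 1) := hδ _
    have hrSd : (0:ℝ) < r + ∑ j, ((x j : ℕ) : ℝ) + δ ((∑ j, x j) + 1) := by linarith
    simp only [hRdef, hHdef, hGdef]
    rw [add_mul]
    congr 1
    rw [Finset.sum_mul]
    exact Finset.sum_congr rfl fun i _ => nm_per_R (c i) ((x i : ℕ) : ℝ)
      (r + ∑ j, ((x j : ℕ) : ℝ)) (δ ((∑ j, x j) + 1)) (pmf x) hrSx.ne' hrSd.ne'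
  -- assembly
  calc (∑' x, f x) - (∑' x, g x)
      = ∑' x, (f x - g x) := (Summable.tsum_sub hsumδ hsumU).symm
    _ = ∑' x, ((∑ i, F i x) + G x) := tsum_congr hdecomp
    _ = (∑' x, ∑ i, F i x) + ∑' x, G x :=
        Summable.tsum_add (summable_sum fun i _ => hFsummable i) hGsummable
    _ = (∑ i, ∑' x, F i x) + ∑' x, G x := by
        rw [Summable.tsum_finsetSum fun i _ => hFsummable i]
    _ = (∑ i, ∑' x, H i x) + ∑' x, G x := by
        rw [Finset.sum_congr rfl fun i _ => htsum i]
    _ = (∑' x, ∑ i, H i x) + ∑' x, G x := by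
        rw [Summable.tsum_finsetSum fun i _ => hHsummable i]
    _ = ∑' x, ((∑ i, H i x) + G x) :=
        (Summable.tsum_add (summable_sum fun i _ => hHsummable i) hGsummable).symm
    _ = ∑' x, R x := tsum_congr fun x => (hRdecomp x).symm
end

section
/- Harmonic-sum/falling-factorial identity: for every real t > 0 and every natural number z ≥ 1, Σ_{k=1}^{z} 1/(t + k − 1) = Σ_{k=1}^{z} (1/k) · [ z(z−1)⋯(z−k+1) ] / [ (t+z−1)(t+z−2)⋯(t+z−k) ], i.e. Σ_{k=1}^{z} 1/(t+k−1) = Σ_{k=1}^{z} (1/k) ∏_{j=0}^{k−1} (z − j)/(t + z − 1 − j). -/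
open scoped BigOperators

lemma den_pos (t : ℝ) (ht : 0 < t) (n m : ℕ) (hm : m ≤ n + 1) :
    0 < ∏ j ∈ Finset.range m, (t + n - j) := by
  apply Finset.prod_pos
  intro j hj
  have hj' : j ≤ n := by have := Finset.mem_range.mp hj; omega
  have : (j : ℝ) ≤ n := by exact_mod_cast hj'
  linarith

lemma partial_tele (t : ℝ) (ht : 0 < t) (n : ℕ) :
    ∀ m, m ≤ n + 1 →
    ∑ k ∈ Finset.range m, (∏ j ∈ Finset.range k, ((n:ℝ) - j)) /
        (∏ j ∈ Finset.range (k+1), (t + n - j))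
      = (1 - (∏ j ∈ Finset.range m, ((n:ℝ) - j)) /
          (∏ j ∈ Finset.range m, (t + n - j))) / t := by
  intro m
  induction m with
  | zero => simp
  | succ m ih =>
    intro hm
    have hm' : m ≤ n + 1 := by omega
    rw [Finset.sum_range_succ, ih hm']
    have hDm : (0:ℝ) < ∏ j ∈ Finset.range m, (t + n - j) := den_pos t ht n m hm'
    have hmn : (m:ℝ) ≤ n := by exact_mod_cast (by omega : m ≤ n)
    have hlast : (0:ℝ) < t + n - m := by linarith
    rw [Finset.prod_range_succ (fun j => (n:ℝ) - j),
        Finset.prod_range_succ (fun j => t + (n:ℝ) - j)]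
    field_simp
    ring

lemma tele (t : ℝ) (ht : 0 < t) (n : ℕ) :
    ∑ k ∈ Finset.range (n+1), (∏ j ∈ Finset.range k, ((n:ℝ) - j)) /
        (∏ j ∈ Finset.range (k+1), (t + n - j)) = 1 / t := by
  rw [partial_tele t ht n (n+1) le_rfl]
  have h0 : (∏ j ∈ Finset.range (n+1), ((n:ℝ) - j)) = 0 :=
    Finset.prod_eq_zero (Finset.self_mem_range_succ n) (by simp)
  rw [h0]
  simp [one_div]

/-- Harmonic-sum/falling-factorial identity:
`∑_{k=1}^z 1/(t+k−1) = ∑_{k=1}^z (1/k) ∏_{j=0}^{k−1} (z−j)/(t+z−1−j)` for `t > 0`, `z ≥ 1`. -/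
theorem harmonic_falling_factorial_identity (t : ℝ) (ht : 0 < t) (z : ℕ) (hz : 1 ≤ z) :
    ∑ k ∈ Finset.range z, (1 : ℝ) / (t + k)
      = ∑ k ∈ Finset.range z, (1 / ((k : ℝ) + 1)) *
          ∏ j ∈ Finset.range (k + 1), ((z : ℝ) - j) / (t + z - 1 - j) := by
  induction z, hz using Nat.le_induction generalizing t ht with
  | base => norm_num
  | succ z hz ih =>
    -- rewrite each term of the new RHS
    have hnew : ∀ k ∈ Finset.range (z+1),
        (1 / ((k : ℝ) + 1)) * ∏ j ∈ Finset.range (k + 1),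
            ((↑(z+1) : ℝ) - ↑j) / (t + ↑(z+1) - 1 - ↑j)
        = (1 / ((k : ℝ) + 1)) * ∏ j ∈ Finset.range (k + 1), ((z:ℝ) - ↑j) / (t + ↑z - ↑j)
          + (∏ j ∈ Finset.range k, ((z:ℝ) - ↑j)) /
            (∏ j ∈ Finset.range (k+1), (t + ↑z - ↑j)) := by
      intro k hk
      have hk' : k ≤ z := by have := Finset.mem_range.mp hk; omega
      have e1 : ∀ j ∈ Finset.range (k+1),
          ((↑(z+1):ℝ) - ↑j) / (t + ↑(z+1) - 1 - ↑j) = (((z:ℝ)+1) - ↑j) / (t + ↑z - ↑j) := by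
        intro j _; push_cast; ring_nf
      rw [Finset.prod_congr rfl e1, Finset.prod_div_distrib, Finset.prod_div_distrib]
      have e2 : ∏ j ∈ Finset.range (k+1), (((z:ℝ)+1) - ↑j)
          = (∏ j ∈ Finset.range k, ((z:ℝ) - ↑j)) * ((z:ℝ)+1) := by
        rw [Finset.prod_range_succ']
        congr 1
        · exact Finset.prod_congr rfl (fun j _ => by push_cast; ring)
        · norm_num
      rw [e2, Finset.prod_range_succ (fun j => (z:ℝ) - ↑j),
          Finset.prod_range_succ (fun j => t + (z:ℝ) - ↑j)]
      have hD : (0:ℝ) < ∏ j ∈ Finset.range k, (t + ↑z - ↑j) := den_pos t ht z k (by omega)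
      have hkz : (k:ℝ) ≤ z := by exact_mod_cast hk'
      have hl : (0:ℝ) < t + ↑z - ↑k := by linarith
      have hk1 : ((k:ℝ)+1) ≠ 0 := by positivity
      field_simp
      ring
    rw [Finset.sum_congr rfl hnew, Finset.sum_add_distrib, tele t ht z]
    -- the extra (k = z) term of the old-style sum vanishes
    have hzero : (∏ j ∈ Finset.range (z+1), ((z:ℝ) - ↑j) / (t + ↑z - ↑j)) = 0 :=
      Finset.prod_eq_zero (Finset.self_mem_range_succ z) (by simp)
    have hsplit : ∑ x ∈ Finset.range (z+1), (1 / ((x:ℝ)+1)) *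
          ∏ j ∈ Finset.range (x+1), ((z:ℝ)-↑j)/(t+↑z-↑j)
        = ∑ x ∈ Finset.range z, (1 / ((x:ℝ)+1)) *
          ∏ j ∈ Finset.range (x+1), ((z:ℝ)-↑j)/(t+↑z-↑j) := by
      rw [Finset.sum_range_succ, hzero, mul_zero, add_zero]
    rw [hsplit]
    -- now handle the LHS
    rw [Finset.sum_range_succ']
    have hL : ∑ i ∈ Finset.range z, (1:ℝ)/(t+↑(i+1)) = ∑ i ∈ Finset.range z, (1:ℝ)/((t+1)+↑i) :=
      Finset.sum_congr rfl (fun i _ => by push_cast; ring_nf)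
    rw [hL, ih (t+1) (by linarith)]
    have hR : ∑ k ∈ Finset.range z, (1 / ((k:ℝ)+1)) *
          ∏ j ∈ Finset.range (k+1), ((z:ℝ)-↑j)/(t+1+↑z-1-↑j)
        = ∑ k ∈ Finset.range z, (1 / ((k:ℝ)+1)) *
          ∏ j ∈ Finset.range (k+1), ((z:ℝ)-↑j)/(t+↑z-↑j) :=
      Finset.sum_congr rfl (fun k _ => by
        congr 1
        exact Finset.prod_congr rfl (fun j _ => by ring_nf))
    rw [hR]
    push_cast
    ring
end

section
/- Key algebraic inequality for predictive density dominance: let r ≥ 1, a > 0, a_0 ∈ ℝ, c ≥ 0 be reals, let x ≥ 1 be an integer, and let k, s be integers with 0 ≤ s and k ≥ s + 1. If (c − a)(r − 1) ≤ x·(−c − k − a_0), then c/(k − s + x + a − 1) ≤ 1 − (x/(r + x − 1)) · (k + r + a_0 + x + a − 1)/(k − s + x + a − 1). (Here c plays the role of (α+1)γ/(β+γ) in the paper.) -/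
/-- Key algebraic inequality for predictive density dominance. -/
theorem predictive_dominance_key_inequality (r a a0 c : ℝ)
    (hr : 1 ≤ r) (ha : 0 < a) (hc : 0 ≤ c)
    (x : ℤ) (hx : 1 ≤ x) (k s : ℤ) (hs : 0 ≤ s) (hk : s + 1 ≤ k)
    (h : (c - a) * (r - 1) ≤ (x : ℝ) * (-c - (k : ℝ) - a0)) :
    c / ((k : ℝ) - (s : ℝ) + (x : ℝ) + a - 1)
      ≤ 1 - ((x : ℝ) / (r + (x : ℝ) - 1)) *
          (((k : ℝ) + r + a0 + (x : ℝ) + a - 1) / ((k : ℝ) - (s : ℝ) + (x : ℝ) + a - 1)) := by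
  have hX : (1:ℝ) ≤ (x:ℝ) := by exact_mod_cast hx
  have hKS : (s:ℝ) + 1 ≤ (k:ℝ) := by exact_mod_cast hk
  have hS : (0:ℝ) ≤ (s:ℝ) := by exact_mod_cast hs
  have hD : (0:ℝ) < (k : ℝ) - (s : ℝ) + (x : ℝ) + a - 1 := by linarith
  have hR : (0:ℝ) < r + (x:ℝ) - 1 := by linarith
  rw [← sub_nonneg]
  have key : 1 - ((x : ℝ) / (r + (x : ℝ) - 1)) *
          (((k : ℝ) + r + a0 + (x : ℝ) + a - 1) / ((k : ℝ) - (s : ℝ) + (x : ℝ) + a - 1))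
        - c / ((k : ℝ) - (s : ℝ) + (x : ℝ) + a - 1)
      = ((r + (x:ℝ) - 1) * ((k:ℝ) - (s:ℝ) + (x:ℝ) + a - 1)
          - (x:ℝ) * ((k:ℝ) + r + a0 + (x:ℝ) + a - 1)
          - c * (r + (x:ℝ) - 1))
        / ((r + (x:ℝ) - 1) * ((k : ℝ) - (s : ℝ) + (x : ℝ) + a - 1)) := by
    field_simp
  rw [key]
  apply div_nonneg _ (mul_nonneg hR.le hD.le)
  nlinarith [mul_nonneg hS (sub_nonneg.2 hX), sq_nonneg ((x:ℝ)-1),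
    mul_nonneg (sub_nonneg.2 hKS) (sub_nonneg.2 hX), mul_nonneg hc (sub_nonneg.2 hX)]
end
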